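/- Let μ be an absolutely continuous probability measure on ℝ with density f satisfying ∫_ℝ |f(x)|^{1+q} dx = Q < ∞ for some q > 0, and let κ satisfy 0 < κ < q/(1+q). Then for every α ∈ ℝ: ∫_ℝ |x − α|^{−κ} dμ(x) ≤ 1 + κ (2^q Q)^{1/(1+q)} / (q/(1+q) − κ). -/

import Mathlib

open MeasureTheory Real
open scoped ENNReal NNReal

noncomputable section

/-- Hölder bound on the measure of a ball. -/
lemma ball_measure_bound
    (μ : Measure ℝ)
    (f : ℝ → ℝ) (hfmeas : Measurable f)
    (hμf : μ = MeasureTheory.volume.withDensity fun x => ENNReal.ofReal (f x))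
    (q : ℝ) (hq : 0 < q) (Q : ℝ)
    (hQint : MeasureTheory.Integrable (fun x => |f x| ^ (1 + q)) MeasureTheory.volume)
    (hQ : ∫ x, |f x| ^ (1 + q) = Q)
    (α r : ℝ) :
    μ (Metric.ball α r)
      ≤ ENNReal.ofReal (2 * r) ^ (q / (1 + q)) * ENNReal.ofReal Q ^ (1 / (1 + q)) := by
  have h1q : (0:ℝ) < 1 + q := by linarith
  set s : Set ℝ := Metric.ball α r with hs
  have hsm : MeasurableSet s := Metric.isOpen_ball.measurableSet
  set F : ℝ → ℝ≥0∞ := s.indicator 1 with hF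
  set G : ℝ → ℝ≥0∞ := fun x => ENNReal.ofReal |f x| with hG
  have hconj : Real.HolderConjugate ((1 + q) / q) (1 + q) := by
    rw [Real.holderConjugate_iff]; constructor
    · rw [lt_div_iff₀ hq]; linarith
    · field_simp; ring
  have hμs : μ s = ∫⁻ x in s, ENNReal.ofReal (f x) := by
    rw [hμf, withDensity_apply _ hsm]
  have hle : μ s ≤ ∫⁻ x, (F * G) x := by
    rw [hμs]
    have heq : ∀ x, (F * G) x = s.indicator G x := by
      intro x
      by_cases hx : x ∈ s <;> simp [hF, hx]
    rw [lintegral_congr heq, lintegral_indicator hsm G]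
    exact lintegral_mono fun x => ENNReal.ofReal_le_ofReal (le_abs_self _)
  have hFm : AEMeasurable F volume := (measurable_const.indicator hsm).aemeasurable
  have hGm : AEMeasurable G volume := (hfmeas.abs.ennreal_ofReal).aemeasurable
  have hhold := ENNReal.lintegral_mul_le_Lp_mul_Lq (volume : Measure ℝ) hconj hFm hGm
  refine hle.trans (hhold.trans ?_)
  have hfst : ∫⁻ x, F x ^ ((1+q)/q) = ENNReal.ofReal (2 * r) := by
    have heq : ∀ x, F x ^ ((1+q)/q) = F x := by
      intro x
      by_cases hx : x ∈ s
      · simp [hF, hx]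
      · simp [hF, hx, ENNReal.zero_rpow_of_pos (div_pos h1q hq)]
    rw [lintegral_congr heq, hF, lintegral_indicator_one hsm, hs, Real.volume_ball]
  have hsnd : ∫⁻ x, G x ^ (1+q) = ENNReal.ofReal Q := by
    have heq : ∀ x, G x ^ (1+q) = ENNReal.ofReal (|f x| ^ (1+q)) := by
      intro x
      rw [hG, ENNReal.ofReal_rpow_of_nonneg (abs_nonneg _) h1q.le]
    rw [lintegral_congr heq, ← hQ,
      MeasureTheory.ofReal_integral_eq_lintegral_ofReal hQint
        (Filter.Eventually.of_forall fun x => Real.rpow_nonneg (abs_nonneg _) _)]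
  rw [hfst, hsnd, one_div ((1+q)/q), inv_div]

theorem inverse_power_moment_bound
    (μ : Measure ℝ) [IsProbabilityMeasure μ]
    (f : ℝ → ℝ) (hfmeas : Measurable f)
    (hμf : μ = MeasureTheory.volume.withDensity fun x => ENNReal.ofReal (f x))
    (q : ℝ) (hq : 0 < q) (Q : ℝ)
    (hQint : MeasureTheory.Integrable (fun x => |f x| ^ (1 + q)) MeasureTheory.volume)
    (hQ : ∫ x, |f x| ^ (1 + q) = Q)
    (κ : ℝ) (hκ₀ : 0 < κ) (hκ₁ : κ < q / (1 + q)) :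
    ∀ α : ℝ,
      ∫⁻ x, ENNReal.ofReal (|x - α| ^ (-κ)) ∂μ
        ≤ ENNReal.ofReal (1 + κ * ((2 : ℝ) ^ q * Q) ^ (1 / (1 + q)) / (q / (1 + q) - κ)) := by
  intro α
  have h1q : (0:ℝ) < 1 + q := by linarith
  set β : ℝ := q / (1 + q) with hβ
  have hβ0 : 0 < β := div_pos hq h1q
  have hβκ : 0 < β - κ := by linarith
  have hQ0 : 0 ≤ Q := by
    rw [← hQ]
    exact integral_nonneg fun x => Real.rpow_nonneg (abs_nonneg _) _
  set C : ℝ := (2:ℝ) ^ β * Q ^ (1 / (1 + q)) with hC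
  have hC0 : 0 ≤ C :=
    mul_nonneg (Real.rpow_nonneg (by norm_num) _) (Real.rpow_nonneg hQ0 _)
  -- layer cake
  have hmble : Measurable fun x : ℝ => |x - α| ^ (-κ) :=
    ((measurable_id.sub_const α).abs).pow measurable_const
  rw [MeasureTheory.lintegral_eq_lintegral_meas_lt μ
    (Filter.Eventually.of_forall fun x => Real.rpow_nonneg (abs_nonneg _) _)
    hmble.aemeasurable]
  -- split domain
  rw [← Set.Ioc_union_Ioi_eq_Ioi (zero_le_one (α := ℝ)),
    lintegral_union measurableSet_Ioi (Set.Ioc_disjoint_Ioi le_rfl)]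
  -- tail bound
  have hexp : -(β/κ) < -1 := by
    rw [neg_lt_neg_iff, lt_div_iff₀ hκ₀, one_mul]; linarith
  have htail : ∀ t : ℝ, 1 ≤ t →
      μ {x : ℝ | t < |x - α| ^ (-κ)} ≤ ENNReal.ofReal (C * t ^ (-(β/κ))) := by
    intro t ht
    have ht0 : (0:ℝ) < t := lt_of_lt_of_le one_pos ht
    have hr0 : (0:ℝ) < t ^ (-κ⁻¹) := Real.rpow_pos_of_pos ht0 _
    have hsub : {x : ℝ | t < |x - α| ^ (-κ)} ⊆ Metric.ball α (t ^ (-κ⁻¹)) := by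
      intro x hx
      simp only [Set.mem_setOf_eq] at hx
      have hxα : 0 < |x - α| := by
        rcases eq_or_lt_of_le (abs_nonneg (x - α)) with h | h
        · exfalso
          rw [← h, Real.zero_rpow (neg_ne_zero.mpr hκ₀.ne')] at hx
          linarith
        · exact h
      have hlt : |x - α| < t ^ (-κ)⁻¹ :=
        (Real.lt_rpow_inv_iff_of_neg hxα ht0 (neg_lt_zero.mpr hκ₀)).mpr hx
      simpa [Metric.mem_ball, Real.dist_eq] using hlt
    refine (measure_mono hsub).trans ?_
    refine (ball_measure_bound μ f hfmeas hμf q hq Q hQint hQ α _).trans ?_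
    have h2r : (0:ℝ) ≤ 2 * t ^ (-κ⁻¹) := by positivity
    rw [ENNReal.ofReal_rpow_of_nonneg h2r hβ0.le,
      ENNReal.ofReal_rpow_of_nonneg hQ0 (by positivity : (0:ℝ) ≤ 1/(1+q)),
      ← ENNReal.ofReal_mul (by positivity)]
    apply ENNReal.ofReal_le_ofReal
    have hpow : (2 * t ^ (-κ⁻¹)) ^ β = 2 ^ β * t ^ (-(β/κ)) := by
      rw [Real.mul_rpow (by norm_num : (0:ℝ) ≤ 2) hr0.le, ← Real.rpow_mul ht0.le]
      congr 1
      field_simp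
    rw [hpow, hC]
    apply le_of_eq
    ring
  have hpart1 : ∫⁻ t in Set.Ioc (0:ℝ) 1, μ {x : ℝ | t < |x - α| ^ (-κ)} ≤ 1 := by
    calc ∫⁻ t in Set.Ioc (0:ℝ) 1, μ {x : ℝ | t < |x - α| ^ (-κ)}
        ≤ ∫⁻ _ in Set.Ioc (0:ℝ) 1, 1 := lintegral_mono fun t => prob_le_one
      _ = 1 := by simp
  have hint : IntegrableOn (fun t : ℝ => C * t ^ (-(β/κ))) (Set.Ioi 1) :=
    (integrableOn_Ioi_rpow_of_lt hexp one_pos).const_mul C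
  have hnn : 0 ≤ᵐ[volume.restrict (Set.Ioi (1:ℝ))] fun t : ℝ => C * t ^ (-(β/κ)) := by
    filter_upwards [ae_restrict_mem measurableSet_Ioi] with t ht
    have : (0:ℝ) < t := lt_trans one_pos ht
    positivity
  have hpart2 : ∫⁻ t in Set.Ioi (1:ℝ), μ {x : ℝ | t < |x - α| ^ (-κ)}
      ≤ ENNReal.ofReal (C * κ / (β - κ)) := by
    calc ∫⁻ t in Set.Ioi (1:ℝ), μ {x : ℝ | t < |x - α| ^ (-κ)}
        ≤ ∫⁻ t in Set.Ioi (1:ℝ), ENNReal.ofReal (C * t ^ (-(β/κ))) := by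
          apply lintegral_mono_ae
          filter_upwards [ae_restrict_mem measurableSet_Ioi] with t ht
          exact htail t ht.le
      _ = ENNReal.ofReal (∫ t in Set.Ioi (1:ℝ), C * t ^ (-(β/κ))) :=
          (MeasureTheory.ofReal_integral_eq_lintegral_ofReal hint hnn).symm
      _ ≤ ENNReal.ofReal (C * κ / (β - κ)) := by
          apply ENNReal.ofReal_le_ofReal
          rw [MeasureTheory.integral_const_mul C _, integral_Ioi_rpow_of_lt hexp one_pos,
            Real.one_rpow]
          apply le_of_eq
          have h1 : -(β/κ) + 1 ≠ 0 := by
            intro h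
            have h2 : β / κ = 1 := by linarith
            rw [div_eq_one_iff_eq hκ₀.ne'] at h2
            linarith
          have h3 : -(1:ℝ) / (-(β/κ) + 1) = κ / (β - κ) := by
            rw [div_eq_div_iff h1 hβκ.ne']
            field_simp
            ring
          rw [h3]
          ring
  refine (add_le_add hpart1 hpart2).trans ?_
  have hCeq : C = ((2:ℝ) ^ q * Q) ^ (1 / (1 + q)) := by
    rw [Real.mul_rpow (by positivity) hQ0, ← Real.rpow_mul (by norm_num : (0:ℝ) ≤ 2), hC, hβ]
    congr 2
    field_simp
  rw [ENNReal.ofReal_add (by norm_num) (by positivity), ENNReal.ofReal_one]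
  apply add_le_add le_rfl
  apply ENNReal.ofReal_le_ofReal
  rw [hCeq]
  apply le_of_eq
  ring
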